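/- Let n ≥ 5. The set V is invariant under every element of the toric-reverse group D_{n+1}, and D_{n+1} acts sharply transitively on V: for all u, v ∈ V there exists exactly one d ∈ D_{n+1} with d(u) = v. -/

import Mathlib

/-- Auxiliary function: the action of the block transposition with cut points
`(i,j,k)` on `{1,…,n}`, written 1-based. -/
def btFun (i j k t : ℕ) : ℕ :=
  if t ≤ i ∨ k < t then t
  else if t ≤ k - j + i then t + j - i
  else t + j - k

theorem btFun_lb {i j k t : ℕ} (h1 : 1 ≤ t) : 1 ≤ btFun i j k t := by
  unfold btFun; split_ifs <;> omega

theorem btFun_ub {i j k t n : ℕ} (ht : t ≤ n) (hjk : j ≤ k) (hkn : k ≤ n) :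
    btFun i j k t ≤ n := by
  unfold btFun; split_ifs <;> omega

theorem btFun_inv {i j k : ℕ} (hij : i < j) (hjk : j < k) (t : ℕ) :
    btFun i (k - j + i) k (btFun i j k t) = t := by
  unfold btFun; split_ifs <;> omega

theorem btFun_inv' {i j k : ℕ} (hij : i < j) (hjk : j < k) (t : ℕ) :
    btFun i j k (btFun i (k - j + i) k t) = t := by
  have h := btFun_inv (i := i) (j := k - j + i) (k := k) (by omega) (by omega) t
  have e : k - (k - j + i) + i = j := by omega
  rwa [e] at h

/-- The block transposition `σ(i,j,k)` as a permutation of `Fin n`,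
where `t : Fin n` encodes the element `t.val + 1` of `{1,…,n}`. -/
def blockT (n i j k : ℕ) (hij : i < j) (hjk : j < k) (hkn : k ≤ n) :
    Equiv.Perm (Fin n) where
  toFun t := ⟨btFun i j k (t.1 + 1) - 1, by
    have h0 := t.isLt
    have h1 := btFun_lb (i := i) (j := j) (k := k) (t := t.1 + 1) (by omega)
    have h2 := btFun_ub (i := i) (j := j) (k := k) (t := t.1 + 1) (n := n)
      (by omega) (by omega) hkn
    omega⟩
  invFun t := ⟨btFun i (k - j + i) k (t.1 + 1) - 1, by
    have h0 := t.isLt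
    have h1 := btFun_lb (i := i) (j := k - j + i) (k := k) (t := t.1 + 1) (by omega)
    have h2 := btFun_ub (i := i) (j := k - j + i) (k := k) (t := t.1 + 1) (n := n)
      (by omega) (by omega) hkn
    omega⟩
  left_inv t := by
    have h1 := btFun_lb (i := i) (j := j) (k := k) (t := t.1 + 1) (by omega)
    have h2 := btFun_inv hij hjk (t.1 + 1)
    apply Fin.ext
    simp only
    have h3 : btFun i j k (t.1 + 1) - 1 + 1 = btFun i j k (t.1 + 1) := by omega
    rw [h3, h2]
    omega
  right_inv t := by
    have h1 := btFun_lb (i := i) (j := k - j + i) (k := k) (t := t.1 + 1) (by omega)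
    have h2 := btFun_inv' hij hjk (t.1 + 1)
    apply Fin.ext
    simp only
    have h3 : btFun i (k - j + i) k (t.1 + 1) - 1 + 1 = btFun i (k - j + i) k (t.1 + 1) := by
      omega
    rw [h3, h2]
    omega

/-- `T_n`: the set of all block transpositions on `{1,…,n}`. -/
def blockTranspositions (n : ℕ) : Set (Equiv.Perm (Fin n)) :=
  {π | ∃ (i j k : ℕ) (hij : i < j) (hjk : j < k) (hkn : k ≤ n),
      blockT n i j k hij hjk hkn = π}

theorem blockT_inv {n i j k : ℕ} (hij : i < j) (hjk : j < k) (hkn : k ≤ n) :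
    (blockT n i j k hij hjk hkn)⁻¹
      = blockT n i (k - j + i) k (by omega) (by omega) hkn :=
  Equiv.ext fun _ => rfl

theorem blockTranspositions_inv_mem {n : ℕ} {π : Equiv.Perm (Fin n)}
    (h : π ∈ blockTranspositions n) : π⁻¹ ∈ blockTranspositions n := by
  obtain ⟨i, j, k, hij, hjk, hkn, rfl⟩ := h
  exact ⟨i, k - j + i, k, by omega, by omega, hkn, (blockT_inv hij hjk hkn).symm⟩

/-- The Cayley graph `Cay(Sym_n, T_n)`. -/
def cayleyT (n : ℕ) : SimpleGraph (Equiv.Perm (Fin n)) where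
  Adj π ρ := π ≠ ρ ∧ π⁻¹ * ρ ∈ blockTranspositions n
  symm := ⟨by
    rintro π ρ ⟨hne, hmem⟩
    refine ⟨hne.symm, ?_⟩
    have h := blockTranspositions_inv_mem hmem
    rwa [mul_inv_rev, inv_inv] at h⟩
  loopless := ⟨fun π h => h.1 rfl⟩

def ext0 {n : ℕ} (π : Equiv.Perm (Fin n)) : Equiv.Perm (Fin (n + 1)) where
  toFun x := Fin.cases 0 (fun t => (π t).succ) x
  invFun x := Fin.cases 0 (fun t => (π⁻¹ t).succ) x
  left_inv x := by
    cases x using Fin.cases with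
    | zero => simp
    | succ t => simp
  right_inv x := by
    cases x using Fin.cases with
    | zero => simp
    | succ t => simp

theorem ext0_zero {n : ℕ} (π : Equiv.Perm (Fin n)) : ext0 π 0 = 0 := by
  simp [ext0]

open Fin.NatCast in
theorem finRotate_pow_apply {n : ℕ} (m : ℕ) (x : Fin (n + 1)) :
    ((finRotate (n + 1)) ^ m) x = x + (m : Fin (n + 1)) := by
  induction m with
  | zero => simp
  | succ m ih =>
      rw [pow_succ', Equiv.Perm.mul_apply, finRotate_succ_apply, ih]
      rw [Nat.cast_succ, add_assoc]

open Fin.NatCast in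
/-- The auxiliary permutation `α^(n+1-r) ∘ [0 π] ∘ α^(π⁻¹(r))` of `{0,1,…,n}`. -/
def toricAux (n r : ℕ) (π : Equiv.Perm (Fin n)) : Equiv.Perm (Fin (n + 1)) :=
  (finRotate (n + 1)) ^ (n + 1 - r) * ext0 π *
    (finRotate (n + 1)) ^ (((ext0 π)⁻¹ (r : Fin (n + 1))) : ℕ)

open Fin.NatCast in
theorem toricAux_apply_zero (n r : ℕ) (hr : r ≤ n) (π : Equiv.Perm (Fin n)) :
    toricAux n r π 0 = 0 := by
  unfold toricAux
  have h : r + (n + 1 - r) = n + 1 := by omega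
  rw [Equiv.Perm.mul_apply, Equiv.Perm.mul_apply, finRotate_pow_apply,
    finRotate_pow_apply, zero_add, Fin.cast_val_eq_self,
    ← Equiv.Perm.mul_apply, mul_inv_cancel, Equiv.Perm.one_apply, ← Nat.cast_add, h, Fin.natCast_self]

/-- Restriction of a permutation of `{0,1,…,n}` fixing `0` to a permutation of `{1,…,n}`. -/
def unext0 {n : ℕ} (τ : Equiv.Perm (Fin (n + 1))) (h : τ 0 = 0) : Equiv.Perm (Fin n) where
  toFun t := (τ t.succ).pred (by
    intro hc
    exact Fin.succ_ne_zero t (τ.injective (hc.trans h.symm)))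
  invFun t := (τ⁻¹ t.succ).pred (by
    intro hc
    have h' : τ⁻¹ 0 = 0 := by
      conv_lhs => rw [← h]
      exact τ.symm_apply_apply 0
    exact Fin.succ_ne_zero t (τ⁻¹.injective (hc.trans h'.symm)))
  left_inv t := by
    apply Fin.succ_injective
    rw [Fin.succ_pred, Fin.succ_pred, ← Equiv.Perm.mul_apply, inv_mul_cancel, Equiv.Perm.one_apply]
  right_inv t := by
    apply Fin.succ_injective
    rw [Fin.succ_pred, Fin.succ_pred, ← Equiv.Perm.mul_apply, mul_inv_cancel, Equiv.Perm.one_apply]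

/-- The toric map `f̄_r` on `Sym_n`. -/
def toricMap (n r : ℕ) (hr : r ≤ n) (π : Equiv.Perm (Fin n)) : Equiv.Perm (Fin n) :=
  unext0 (toricAux n r π) (toricAux_apply_zero n r hr π)

/-- The reversal `w : t ↦ n+1-t` of `{1,…,n}`, in the `Fin n` encoding. -/
def wrev (n : ℕ) : Equiv.Perm (Fin n) where
  toFun t := ⟨n - 1 - t.val, by have := t.isLt; omega⟩
  invFun t := ⟨n - 1 - t.val, by have := t.isLt; omega⟩
  left_inv t := by
    have := t.isLt
    apply Fin.ext
    simp only
    omega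
  right_inv t := by
    have := t.isLt
    apply Fin.ext
    simp only
    omega

theorem wrev_wrev {n : ℕ} (t : Fin n) : wrev n (wrev n t) = t := by
  have := t.isLt
  apply Fin.ext
  simp only [wrev, Equiv.coe_fn_mk]
  omega

/-- The reverse map `g` on `Sym_n`: `g(π) = w ∘ π ∘ w`,
i.e. `(g π)(t) = n+1-π(n+1-t)` in 1-based notation. -/
def revMap {n : ℕ} (π : Equiv.Perm (Fin n)) : Equiv.Perm (Fin n) :=
  wrev n * π * wrev n

theorem revMap_revMap {n : ℕ} (π : Equiv.Perm (Fin n)) : revMap (revMap π) = π := by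
  ext t
  simp only [revMap, Equiv.Perm.mul_apply]
  rw [wrev_wrev, wrev_wrev]

theorem ext0_injective {n : ℕ} : Function.Injective (ext0 (n := n)) := by
  intro π1 π2 h
  ext t
  have h2 : ext0 π1 t.succ = ext0 π2 t.succ := by rw [h]
  simp only [ext0, Equiv.coe_fn_mk, Fin.cases_succ] at h2
  exact congrArg Fin.val (Fin.succ_injective _ h2)

theorem unext0_inj {n : ℕ} {τ1 τ2 : Equiv.Perm (Fin (n + 1))} {h1 : τ1 0 = 0}
    {h2 : τ2 0 = 0} (h : unext0 τ1 h1 = unext0 τ2 h2) : τ1 = τ2 := by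
  ext x
  cases x using Fin.cases with
  | zero => rw [h1, h2]
  | succ t =>
      have hfun : (unext0 τ1 h1) t = (unext0 τ2 h2) t := by rw [h]
      have hne1 : τ1 t.succ ≠ 0 := fun hc => Fin.succ_ne_zero t (τ1.injective (hc.trans h1.symm))
      have hne2 : τ2 t.succ ≠ 0 := fun hc => Fin.succ_ne_zero t (τ2.injective (hc.trans h2.symm))
      have e1 : ((unext0 τ1 h1) t).succ = τ1 t.succ := by
        show ((τ1 t.succ).pred hne1).succ = τ1 t.succ
        exact Fin.succ_pred _ _
      have e2 : ((unext0 τ2 h2) t).succ = τ2 t.succ := by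
        show ((τ2 t.succ).pred hne2).succ = τ2 t.succ
        exact Fin.succ_pred _ _
      rw [← e1, ← e2, hfun]

open Fin.NatCast in
theorem toricMap_injective (n r : ℕ) (hr : r ≤ n) :
    Function.Injective (toricMap n r hr) := by
  intro π1 π2 h
  have h' : toricAux n r π1 = toricAux n r π2 := unext0_inj h
  unfold toricAux at h'
  rw [mul_assoc, mul_assoc] at h'
  have h'' := mul_left_cancel h'
  set c1 : ℕ := (((ext0 π1)⁻¹ (r : Fin (n + 1))) : ℕ) with hc1
  set c2 : ℕ := (((ext0 π2)⁻¹ (r : Fin (n + 1))) : ℕ) with hc2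
  have happ := congrArg (fun (e : Equiv.Perm (Fin (n + 1))) => e (-(c1 : Fin (n + 1)))) h''
  simp only [Equiv.Perm.mul_apply, finRotate_pow_apply] at happ
  rw [neg_add_cancel, ext0_zero] at happ
  have hz : (-(c1 : Fin (n + 1)) + (c2 : Fin (n + 1))) = 0 :=
    (ext0 π2).injective (by rw [← happ, ext0_zero])
  have hcc : (c1 : Fin (n + 1)) = (c2 : Fin (n + 1)) := by
    have := neg_add_eq_zero.mp hz
    exact this
  have hpow : (finRotate (n + 1)) ^ c1 = (finRotate (n + 1)) ^ c2 := by
    ext x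
    rw [finRotate_pow_apply, finRotate_pow_apply, hcc]
  rw [hpow] at h''
  exact ext0_injective (mul_right_cancel h'')

/-- The toric map `f̄ = f̄_1` as a permutation of the set `Sym_n`. -/
noncomputable def toricEquiv (n : ℕ) (hn : 1 ≤ n) : Equiv.Perm (Equiv.Perm (Fin n)) :=
  Equiv.ofBijective (toricMap n 1 hn)
    (Finite.injective_iff_bijective.mp (toricMap_injective n 1 hn))

/-- The reverse map `g` as a permutation of the set `Sym_n`. -/
def revEquiv (n : ℕ) : Equiv.Perm (Equiv.Perm (Fin n)) where
  toFun := revMap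
  invFun := revMap
  left_inv := revMap_revMap
  right_inv := revMap_revMap

/-- The toric-reverse group `D_{n+1}`: the group of permutations of the set `Sym_n`
generated by the toric map `f̄` and the reverse map `g`. -/
def toricReverseGroup (n : ℕ) (hn : 1 ≤ n) :
    Subgroup (Equiv.Perm (Equiv.Perm (Fin n))) :=
  Subgroup.closure {toricEquiv n hn, revEquiv n}

/-- The automorphism group of a simple graph, as a subgroup of the group of
permutations of its vertex set. -/
def graphAut {V : Type*} (G : SimpleGraph V) : Subgroup (Equiv.Perm V) where
  carrier := {e | ∀ u v, G.Adj (e u) (e v) ↔ G.Adj u v}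
  one_mem' := by intro u v; simp
  mul_mem' := by
    intro a b ha hb u v
    rw [Equiv.Perm.mul_apply, Equiv.Perm.mul_apply, ha, hb]
  inv_mem' := by
    intro a ha u v
    conv_rhs => rw [← (show a (a⁻¹ u) = u by rw [← Equiv.Perm.mul_apply, mul_inv_cancel, Equiv.Perm.one_apply]),
      ← (show a (a⁻¹ v) = v by rw [← Equiv.Perm.mul_apply, mul_inv_cancel, Equiv.Perm.one_apply])]
    rw [ha]
/-- The pair `e_m`, `0 ≤ m ≤ n`. -/
def epair (n : ℕ) (hn : 5 ≤ n) (m : ℕ) (hm : m ≤ n) : Set (Equiv.Perm (Fin n)) :=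
  if h : m ≤ n - 3 then
    {blockT n m (m + 1) (m + 3) (by omega) (by omega) (by omega),
     blockT n m (m + 2) (m + 3) (by omega) (by omega) (by omega)}
  else if h2 : m = n - 2 then
    {blockT n 0 (n - 2) (n - 1) (by omega) (by omega) (by omega),
     blockT n 0 (n - 2) n (by omega) (by omega) (by omega)}
  else if h3 : m = n - 1 then
    {blockT n 1 (n - 1) n (by omega) (by omega) (by omega),
     blockT n 0 1 (n - 1) (by omega) (by omega) (by omega)}
  else
    {blockT n 0 2 n (by omega) (by omega) (by omega),
     blockT n 1 2 n (by omega) (by omega) (by omega)}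

/-- `V`: the set of the `2(n+1)` endpoints of the pairs `e_0, …, e_n`. -/
def Vset (n : ℕ) (hn : 5 ≤ n) : Set (Equiv.Perm (Fin n)) :=
  {π | ∃ (m : ℕ) (hm : m ≤ n), π ∈ epair n hn m hm}

section Ported

open Fin.NatCast Fin.CommRing

theorem Equiv.Perm.inv_apply_self {α : Type*} (f : Equiv.Perm α) (x : α) : f⁻¹ (f x) = x :=
  Equiv.symm_apply_apply f x

theorem Equiv.Perm.apply_inv_self {α : Type*} (f : Equiv.Perm α) (x : α) : f (f⁻¹ x) = x :=
  Equiv.apply_symm_apply f x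

section Aux

variable {n : ℕ}

theorem ext0_succ (π : Equiv.Perm (Fin n)) (t : Fin n) : ext0 π t.succ = (π t).succ := by
  simp [ext0]

theorem ext0_inv (π : Equiv.Perm (Fin n)) : (ext0 π)⁻¹ = ext0 π⁻¹ :=
  Equiv.ext fun _ => rfl

theorem ext0_inv_zero (π : Equiv.Perm (Fin n)) : (ext0 π)⁻¹ 0 = 0 := rfl

theorem ext0_unext0 (τ : Equiv.Perm (Fin (n + 1))) (h : τ 0 = 0) :
    ext0 (unext0 τ h) = τ := by
  apply Equiv.ext
  intro x
  cases x using Fin.cases with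
  | zero => rw [ext0_zero, h]
  | succ t =>
      rw [ext0_succ]
      show ((τ t.succ).pred (fun hc =>
        Fin.succ_ne_zero t (τ.injective (hc.trans h.symm)))).succ = τ t.succ
      exact Fin.succ_pred _ _

theorem ext0_toricMap (r : ℕ) (hr : r ≤ n) (π : Equiv.Perm (Fin n)) :
    ext0 (toricMap n r hr π) = toricAux n r π :=
  ext0_unext0 _ _

theorem natCast_n_eq : ((n : ℕ) : Fin (n + 1)) = -1 := by
  have h : ((n : ℕ) : Fin (n + 1)) + 1 = 0 := by
    have h2 := Fin.natCast_self (n + 1)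
    push_cast at h2
    exact h2
  exact eq_neg_of_add_eq_zero_left h

/-- Master lemma: characterize the image of `π` under the toric map `f̄`. -/
theorem toricMap_eq (hn : 1 ≤ n) (π ρ : Equiv.Perm (Fin n)) (c : ℕ)
    (hc : (ext0 π)⁻¹ 1 = (c : Fin (n + 1)))
    (hpt : ∀ x : Fin (n + 1), ext0 π (x + (c : Fin (n + 1))) = ext0 ρ x + 1) :
    toricMap n 1 hn π = ρ := by
  apply ext0_injective
  rw [ext0_toricMap]
  apply Equiv.ext
  intro x
  unfold toricAux
  rw [Equiv.Perm.mul_apply, Equiv.Perm.mul_apply, finRotate_pow_apply,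
    finRotate_pow_apply, Nat.cast_one, hc, Fin.cast_val_eq_self, hpt x,
    Nat.add_sub_cancel, natCast_n_eq]
  ring

end Aux
section Verts

variable {n : ℕ}

theorem ext0_blockT_val (i j k : ℕ) (hij : i < j) (hjk : j < k) (hkn : k ≤ n)
    (y : Fin (n + 1)) :
    ((ext0 (blockT n i j k hij hjk hkn)) y).val = btFun i j k y.val := by
  cases y using Fin.cases with
  | zero =>
      rw [ext0_zero]
      show 0 = btFun i j k 0
      unfold btFun
      rw [if_pos (Or.inl (Nat.zero_le i))]
  | succ t =>
      rw [ext0_succ]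
      show (blockT n i j k hij hjk hkn t).val + 1 = btFun i j k (t.val + 1)
      show btFun i j k (t.val + 1) - 1 + 1 = btFun i j k (t.val + 1)
      have := btFun_lb (i := i) (j := j) (k := k) (t := t.val + 1) (by omega)
      omega

theorem mod_helper {a : ℕ} (h : a < 2 * (n + 1)) :
    a % (n + 1) = if a < n + 1 then a else a - (n + 1) := by
  split_ifs with hlt
  · exact Nat.mod_eq_of_lt hlt
  · rw [Nat.mod_eq_sub_mod (by omega)]
    exact Nat.mod_eq_of_lt (by omega)

theorem toricMap_blockT_eq (hn : 1 ≤ n) {i j k i' j' k' c : ℕ}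
    (hij : i < j) (hjk : j < k) (hkn : k ≤ n)
    (hij' : i' < j') (hjk' : j' < k') (hkn' : k' ≤ n)
    (hcn : c ≤ n)
    (hc : btFun i j k c = 1)
    (hpt : ∀ xv, xv ≤ n →
      btFun i j k (if xv + c < n + 1 then xv + c else xv + c - (n + 1))
      = (if btFun i' j' k' xv + 1 < n + 1 then btFun i' j' k' xv + 1
         else btFun i' j' k' xv + 1 - (n + 1))) :
    toricMap n 1 hn (blockT n i j k hij hjk hkn) = blockT n i' j' k' hij' hjk' hkn' := by
  apply toricMap_eq hn _ _ c
  · rw [Equiv.Perm.inv_eq_iff_eq]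
    symm
    apply Fin.ext
    rw [ext0_blockT_val, Fin.val_cast_of_lt (n := n + 1) (by omega), hc, Fin.val_one']
    exact (Nat.mod_eq_of_lt (by omega)).symm
  · intro x
    have hx := x.isLt
    have hub : btFun i' j' k' x.val ≤ n := btFun_ub (by omega) (by omega) hkn'
    apply Fin.ext
    rw [ext0_blockT_val, Fin.val_add, Fin.val_add, ext0_blockT_val,
      Fin.val_cast_of_lt (by omega : c < n + 1), Fin.val_one',
      Nat.mod_eq_of_lt (by omega : 1 < n + 1),
      mod_helper (by omega), mod_helper (by omega)]
    exact hpt x.val (by omega)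

/-- The vertex family: `vv n hn false m` / `vv n hn true m` are the two endpoints
of the pair `e_m`. -/
def vv (n : ℕ) (hn : 5 ≤ n) (s : Bool) (m : ℕ) : Equiv.Perm (Fin n) :=
  if h : m ≤ n - 3 then
    if s then blockT n m (m + 2) (m + 3) (by omega) (by omega) (by omega)
    else blockT n m (m + 1) (m + 3) (by omega) (by omega) (by omega)
  else if h2 : m = n - 2 then
    if s then blockT n 0 (n - 2) n (by omega) (by omega) (by omega)
    else blockT n 0 (n - 2) (n - 1) (by omega) (by omega) (by omega)
  else if h3 : m = n - 1 then
    if s then blockT n 0 1 (n - 1) (by omega) (by omega) (by omega)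
    else blockT n 1 (n - 1) n (by omega) (by omega) (by omega)
  else
    if s then blockT n 1 2 n (by omega) (by omega) (by omega)
    else blockT n 0 2 n (by omega) (by omega) (by omega)

theorem vv_false_low (hn : 5 ≤ n) {m : ℕ} (h : m ≤ n - 3) :
    vv n hn false m = blockT n m (m + 1) (m + 3) (by omega) (by omega) (by omega) := by
  unfold vv; rw [dif_pos h]; simp

theorem vv_true_low (hn : 5 ≤ n) {m : ℕ} (h : m ≤ n - 3) :
    vv n hn true m = blockT n m (m + 2) (m + 3) (by omega) (by omega) (by omega) := by
  unfold vv; rw [dif_pos h]; simp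

theorem vv_false_n2 (hn : 5 ≤ n) :
    vv n hn false (n - 2) = blockT n 0 (n - 2) (n - 1) (by omega) (by omega) (by omega) := by
  unfold vv; rw [dif_neg (by omega), dif_pos rfl]; simp

theorem vv_true_n2 (hn : 5 ≤ n) :
    vv n hn true (n - 2) = blockT n 0 (n - 2) n (by omega) (by omega) (by omega) := by
  unfold vv; rw [dif_neg (by omega), dif_pos rfl]; simp

theorem vv_false_n1 (hn : 5 ≤ n) :
    vv n hn false (n - 1) = blockT n 1 (n - 1) n (by omega) (by omega) (by omega) := by
  unfold vv; rw [dif_neg (by omega), dif_neg (by omega), dif_pos rfl]; simp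

theorem vv_true_n1 (hn : 5 ≤ n) :
    vv n hn true (n - 1) = blockT n 0 1 (n - 1) (by omega) (by omega) (by omega) := by
  unfold vv; rw [dif_neg (by omega), dif_neg (by omega), dif_pos rfl]; simp

theorem vv_false_top (hn : 5 ≤ n) :
    vv n hn false n = blockT n 0 2 n (by omega) (by omega) (by omega) := by
  unfold vv; rw [dif_neg (by omega), dif_neg (by omega), dif_neg (by omega)]; simp

theorem vv_true_top (hn : 5 ≤ n) :
    vv n hn true n = blockT n 1 2 n (by omega) (by omega) (by omega) := by
  unfold vv; rw [dif_neg (by omega), dif_neg (by omega), dif_neg (by omega)]; simp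

end Verts
section Steps

variable {n : ℕ}

set_option maxHeartbeats 1000000 in
theorem fstep (hn : 5 ≤ n) (s : Bool) (m : ℕ) (h1 : 1 ≤ m) (hm : m ≤ n) :
    toricMap n 1 (le_trans (by norm_num) hn) (vv n hn s m) = vv n hn s (m - 1) := by
  cases s
  · by_cases hA : m ≤ n - 3
    · rw [vv_false_low hn hA, vv_false_low hn (show m - 1 ≤ n - 3 by omega)]
      exact toricMap_blockT_eq (c := 1) (by omega) _ _ _ _ _ _ (by omega)
        (by unfold btFun; split_ifs <;> omega)
        (fun xv hxv => by unfold btFun; split_ifs <;> omega)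
    · by_cases hB : m = n - 2
      · rw [hB, show n - 2 - 1 = n - 3 from by omega, vv_false_n2 hn,
          vv_false_low hn (le_refl _)]
        exact toricMap_blockT_eq (c := 2) (by omega) _ _ _ _ _ _ (by omega)
          (by unfold btFun; split_ifs <;> omega)
          (fun xv hxv => by unfold btFun; split_ifs <;> omega)
      · by_cases hC : m = n - 1
        · rw [hC, show n - 1 - 1 = n - 2 from by omega, vv_false_n1 hn, vv_false_n2 hn]
          exact toricMap_blockT_eq (c := 1) (by omega) _ _ _ _ _ _ (by omega)
            (by unfold btFun; split_ifs <;> omega)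
            (fun xv hxv => by unfold btFun; split_ifs <;> omega)
        · have hD : m = n := by omega
          rw [hD, vv_false_top hn, vv_false_n1 hn]
          exact toricMap_blockT_eq (c := n - 1) (by omega) _ _ _ _ _ _ (by omega)
            (by unfold btFun; split_ifs <;> omega)
            (fun xv hxv => by unfold btFun; split_ifs <;> omega)
  · by_cases hA : m ≤ n - 3
    · rw [vv_true_low hn hA, vv_true_low hn (show m - 1 ≤ n - 3 by omega)]
      exact toricMap_blockT_eq (c := 1) (by omega) _ _ _ _ _ _ (by omega)
        (by unfold btFun; split_ifs <;> omega)
        (fun xv hxv => by unfold btFun; split_ifs <;> omega)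
    · by_cases hB : m = n - 2
      · rw [hB, show n - 2 - 1 = n - 3 from by omega, vv_true_n2 hn,
          vv_true_low hn (le_refl _)]
        exact toricMap_blockT_eq (c := 3) (by omega) _ _ _ _ _ _ (by omega)
          (by unfold btFun; split_ifs <;> omega)
          (fun xv hxv => by unfold btFun; split_ifs <;> omega)
      · by_cases hC : m = n - 1
        · rw [hC, show n - 1 - 1 = n - 2 from by omega, vv_true_n1 hn, vv_true_n2 hn]
          exact toricMap_blockT_eq (c := n - 1) (by omega) _ _ _ _ _ _ (by omega)
            (by unfold btFun; split_ifs <;> omega)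
            (fun xv hxv => by unfold btFun; split_ifs <;> omega)
        · have hD : m = n := by omega
          rw [hD, vv_true_top hn, vv_true_n1 hn]
          exact toricMap_blockT_eq (c := 1) (by omega) _ _ _ _ _ _ (by omega)
            (by unfold btFun; split_ifs <;> omega)
            (fun xv hxv => by unfold btFun; split_ifs <;> omega)

theorem fwrap (hn : 5 ≤ n) (s : Bool) :
    toricMap n 1 (le_trans (by norm_num) hn) (vv n hn s 0) = vv n hn s n := by
  cases s
  · rw [vv_false_low hn (show 0 ≤ n - 3 by omega), vv_false_top hn]
    exact toricMap_blockT_eq (c := 3) (by omega) _ _ _ _ _ _ (by omega)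
      (by unfold btFun; split_ifs <;> omega)
      (fun xv hxv => by unfold btFun; split_ifs <;> omega)
  · rw [vv_true_low hn (show 0 ≤ n - 3 by omega), vv_true_top hn]
    exact toricMap_blockT_eq (c := 2) (by omega) _ _ _ _ _ _ (by omega)
      (by unfold btFun; split_ifs <;> omega)
      (fun xv hxv => by unfold btFun; split_ifs <;> omega)

end Steps
section Rev

variable {n : ℕ}

theorem blockT_congr {i j k i' j' k' : ℕ} (hi : i = i') (hj : j = j') (hk : k = k')
    {hij : i < j} {hjk : j < k} {hkn : k ≤ n} {hij' : i' < j'} {hjk' : j' < k'}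
    {hkn' : k' ≤ n} :
    blockT n i j k hij hjk hkn = blockT n i' j' k' hij' hjk' hkn' := by
  subst hi; subst hj; subst hk; rfl

theorem rev_blockT {i j k : ℕ} (hij : i < j) (hjk : j < k) (hkn : k ≤ n) :
    revMap (blockT n i j k hij hjk hkn)
      = blockT n (n - k) (n - j) (n - i) (by omega) (by omega) (by omega) := by
  apply Equiv.ext
  intro t
  have ht := t.isLt
  apply Fin.ext
  show (wrev n ((blockT n i j k hij hjk hkn) (wrev n t))).val = _
  simp only [wrev, blockT, Equiv.coe_fn_mk]
  unfold btFun
  split_ifs <;> omega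

theorem revEquiv_apply (π : Equiv.Perm (Fin n)) : revEquiv n π = revMap π := rfl

theorem grev0 (hn : 5 ≤ n) :
    revEquiv n (vv n hn false n) = vv n hn true (n - 2) := by
  rw [revEquiv_apply, vv_false_top hn, rev_blockT, vv_true_n2 hn]
  exact blockT_congr (by omega) (by omega) (by omega)

theorem grev_mem (hn : 5 ≤ n) (s : Bool) (m : ℕ) (hm : m ≤ n) :
    ∃ m' ≤ n, revEquiv n (vv n hn s m) = vv n hn (!s) m' := by
  cases s
  · simp only [Bool.not_false]
    by_cases hA : m ≤ n - 3
    · exact ⟨n - 3 - m, by omega, by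
        rw [revEquiv_apply, vv_false_low hn hA, rev_blockT,
          vv_true_low hn (show n - 3 - m ≤ n - 3 by omega)]
        exact blockT_congr (by omega) (by omega) (by omega)⟩
    · by_cases hB : m = n - 2
      · exact ⟨n, le_refl n, by
          rw [hB, revEquiv_apply, vv_false_n2 hn, rev_blockT, vv_true_top hn]
          exact blockT_congr (by omega) (by omega) (by omega)⟩
      · by_cases hC : m = n - 1
        · exact ⟨n - 1, by omega, by
            rw [hC, revEquiv_apply, vv_false_n1 hn, rev_blockT, vv_true_n1 hn]
            exact blockT_congr (by omega) (by omega) (by omega)⟩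
        · have hD : m = n := by omega
          exact ⟨n - 2, by omega, by rw [hD]; exact grev0 hn⟩
  · simp only [Bool.not_true]
    by_cases hA : m ≤ n - 3
    · exact ⟨n - 3 - m, by omega, by
        rw [revEquiv_apply, vv_true_low hn hA, rev_blockT,
          vv_false_low hn (show n - 3 - m ≤ n - 3 by omega)]
        exact blockT_congr (by omega) (by omega) (by omega)⟩
    · by_cases hB : m = n - 2
      · exact ⟨n, le_refl n, by
          rw [hB, revEquiv_apply, vv_true_n2 hn, rev_blockT, vv_false_top hn]
          exact blockT_congr (by omega) (by omega) (by omega)⟩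
      · by_cases hC : m = n - 1
        · exact ⟨n - 1, by omega, by
            rw [hC, revEquiv_apply, vv_true_n1 hn, rev_blockT, vv_false_n1 hn]
            exact blockT_congr (by omega) (by omega) (by omega)⟩
        · have hD : m = n := by omega
          exact ⟨n - 2, by omega, by
            rw [hD, revEquiv_apply, vv_true_top hn, rev_blockT, vv_false_n2 hn]
            exact blockT_congr (by omega) (by omega) (by omega)⟩

end Rev
section GroupRel

variable {n : ℕ}

theorem toricEquiv_apply (h : 1 ≤ n) (π : Equiv.Perm (Fin n)) :
    toricEquiv n h π = toricMap n 1 h π := rfl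

theorem ext0_mul (a b : Equiv.Perm (Fin n)) : ext0 (a * b) = ext0 a * ext0 b := by
  apply Equiv.ext
  intro x
  cases x using Fin.cases with
  | zero => rw [Equiv.Perm.mul_apply, ext0_zero, ext0_zero, ext0_zero]
  | succ t => rw [Equiv.Perm.mul_apply, ext0_succ, ext0_succ, ext0_succ,
      Equiv.Perm.mul_apply]

theorem ext0_wrev (y : Fin (n + 1)) : ext0 (wrev n) y = -y := by
  cases y using Fin.cases with
  | zero => rw [ext0_zero, neg_zero]
  | succ t =>
      rw [ext0_succ]
      have ht := t.isLt
      symm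
      apply neg_eq_of_add_eq_zero_left
      apply Fin.ext
      rw [Fin.val_add, Fin.val_zero]
      have h1 : ((wrev n t).succ).val = n - t.val := by
        simp only [Fin.val_succ, wrev, Equiv.coe_fn_mk]
        omega
      rw [h1, Fin.val_succ]
      have h2 : n - t.val + (t.val + 1) = n + 1 := by omega
      rw [h2, Nat.mod_self]

theorem ext0_revMap_apply (π : Equiv.Perm (Fin n)) (y : Fin (n + 1)) :
    ext0 (revMap π) y = -(ext0 π (-y)) := by
  unfold revMap
  rw [ext0_mul, ext0_mul, Equiv.Perm.mul_apply, Equiv.Perm.mul_apply,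
    ext0_wrev, ext0_wrev]

theorem toric_apply (h : 1 ≤ n) (τ : Equiv.Perm (Fin n)) (x : Fin (n + 1)) :
    ext0 (toricMap n 1 h τ) x = ext0 τ (x + (ext0 τ)⁻¹ 1) - 1 := by
  rw [ext0_toricMap]
  unfold toricAux
  rw [Equiv.Perm.mul_apply, Equiv.Perm.mul_apply, finRotate_pow_apply,
    finRotate_pow_apply, Nat.cast_one, Fin.cast_val_eq_self,
    Nat.add_sub_cancel, natCast_n_eq]
  ring

theorem toric_pow_formula (h : 1 ≤ n) (π : Equiv.Perm (Fin n)) :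
    ∀ m : ℕ, 1 ≤ m → m ≤ n + 1 → ∀ x : Fin (n + 1),
    ext0 ((toricEquiv n h ^ m) π) x
      = ext0 π (x + (ext0 π)⁻¹ ((m : ℕ) : Fin (n + 1))) - ((m : ℕ) : Fin (n + 1)) := by
  intro m
  induction m with
  | zero => omega
  | succ m ih =>
      intro h1 hm x
      rcases Nat.eq_or_lt_of_le h1 with h1' | h1'
      · -- m + 1 = 1, i.e. m = 0
        have hm0 : m = 0 := by omega
        subst hm0
        rw [pow_one, toricEquiv_apply, toric_apply, Nat.cast_one]
      · have hm1 : 1 ≤ m := by omega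
        have key : ∀ z, ext0 ((toricEquiv n h ^ m) π) z
            = ext0 π (z + (ext0 π)⁻¹ ((m : ℕ) : Fin (n + 1))) - ((m : ℕ) : Fin (n + 1)) :=
          fun z => ih hm1 (by omega) z
        rw [pow_succ', Equiv.Perm.mul_apply, toricEquiv_apply, toric_apply, key]
        set b := (ext0 π)⁻¹ ((m : ℕ) : Fin (n + 1)) with hb
        set b' := (ext0 π)⁻¹ (((m : ℕ) + 1 : ℕ) : Fin (n + 1)) with hb'
        have hw : (ext0 ((toricEquiv n h ^ m) π))⁻¹ 1 = b' - b := by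
          rw [Equiv.Perm.inv_eq_iff_eq, key]
          have harg : b' - b + b = b' := by ring
          rw [harg, hb', Equiv.Perm.apply_inv_self]
          push_cast
          ring
        rw [hw]
        have harg2 : x + (b' - b) + b = x + b' := by ring
        rw [harg2]
        push_cast
        ring

theorem toric_pow_eq_one (h : 1 ≤ n) : (toricEquiv n h) ^ (n + 1) = 1 := by
  apply Equiv.ext
  intro π
  apply ext0_injective
  apply Equiv.ext
  intro x
  rw [toric_pow_formula h π (n + 1) (by omega) (le_refl _) x, Fin.natCast_self,
    ext0_inv_zero, add_zero, sub_zero]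
  rfl

theorem rev_sq : revEquiv n * revEquiv n = 1 :=
  Equiv.ext fun π => revMap_revMap π

theorem dihedral (h : 1 ≤ n) :
    toricEquiv n h * revEquiv n * (toricEquiv n h * revEquiv n) = 1 := by
  apply Equiv.ext
  intro π
  simp only [Equiv.Perm.mul_apply, Equiv.Perm.one_apply, toricEquiv_apply,
    revEquiv_apply]
  apply ext0_injective
  apply Equiv.ext
  intro x
  set c₁ := (ext0 (revMap π))⁻¹ 1 with hc₁
  have hτ₁ : ∀ z, ext0 (toricMap n 1 h (revMap π)) z
      = -(ext0 π (-(z + c₁))) - 1 := fun z => by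
    rw [toric_apply, ← hc₁, ext0_revMap_apply]
  have hc2 : (ext0 (revMap (toricMap n 1 h (revMap π))))⁻¹ 1 = c₁ := by
    rw [Equiv.Perm.inv_eq_iff_eq, ext0_revMap_apply, hτ₁]
    have harg : -(-c₁ + c₁) = 0 := by ring
    rw [harg, ext0_zero]
    ring
  rw [toric_apply, hc2, ext0_revMap_apply, hτ₁]
  have harg : -(-(x + c₁) + c₁) = x := by ring
  rw [harg]
  ring

end GroupRel
section NormalForm

variable {n : ℕ}

theorem rev_inv : (revEquiv n)⁻¹ = revEquiv n :=
  inv_eq_of_mul_eq_one_right rev_sq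

theorem toric_inv (h : 1 ≤ n) : (toricEquiv n h)⁻¹ = (toricEquiv n h) ^ n :=
  inv_eq_of_mul_eq_one_right (by rw [← pow_succ']; exact toric_pow_eq_one h)

theorem rev_toric (h : 1 ≤ n) :
    revEquiv n * toricEquiv n h = (toricEquiv n h) ^ n * revEquiv n := by
  set F := toricEquiv n h
  set G := revEquiv n
  have hd' : (F * G * F) * G = 1 := by rw [mul_assoc]; exact dihedral h
  have hFGF : F * G * F = G := by
    have h2 := eq_inv_of_mul_eq_one_left hd'
    rw [h2, rev_inv]
  calc G * F = F⁻¹ * (F * G * F) := by group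
    _ = F⁻¹ * G := by rw [hFGF]
    _ = F ^ n * G := by rw [toric_inv]

theorem rev_toric_pow (h : 1 ≤ n) (i : ℕ) :
    revEquiv n * (toricEquiv n h) ^ i = (toricEquiv n h) ^ (i * n) * revEquiv n := by
  set F := toricEquiv n h
  set G := revEquiv n
  induction i with
  | zero => simp
  | succ i ih =>
      calc G * F ^ (i + 1) = (G * F ^ i) * F := by rw [pow_succ, mul_assoc]
        _ = F ^ (i * n) * (G * F) := by rw [ih, mul_assoc]
        _ = F ^ (i * n) * (F ^ n * G) := by rw [rev_toric]
        _ = F ^ (i * n + n) * G := by rw [← mul_assoc, ← pow_add]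
        _ = F ^ ((i + 1) * n) * G := by ring_nf
theorem toric_pow_mod (h : 1 ≤ n) (k : ℕ) :
    (toricEquiv n h) ^ k = (toricEquiv n h) ^ (k % (n + 1)) := by
  conv_lhs => rw [← Nat.div_add_mod k (n + 1)]
  rw [pow_add, pow_mul, toric_pow_eq_one h, one_pow, one_mul]

theorem mem_D_form (h : 1 ≤ n) {d : Equiv.Perm (Equiv.Perm (Fin n))}
    (hd : d ∈ toricReverseGroup n h) :
    ∃ i ≤ n, d = (toricEquiv n h) ^ i ∨ d = (toricEquiv n h) ^ i * revEquiv n := by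
  set F := toricEquiv n h with hF
  set G := revEquiv n with hG
  have hmod : ∀ k : ℕ, k % (n + 1) ≤ n := fun k => Nat.le_of_lt_succ (Nat.mod_lt _ (by omega))
  refine Subgroup.closure_induction ?_ ?_ ?_ ?_ hd
  · rintro x (rfl | rfl)
    · exact ⟨1 % (n + 1), hmod 1, Or.inl (by rw [← toric_pow_mod h, pow_one])⟩
    · exact ⟨0, by omega, Or.inr (by rw [pow_zero, one_mul])⟩
  · exact ⟨0, by omega, Or.inl (pow_zero F).symm⟩
  · rintro x y - - ⟨i, hi, hx | hx⟩ ⟨j, hj, hy | hy⟩ <;> subst hx <;> subst hy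
    · exact ⟨(i + j) % (n + 1), hmod _, Or.inl (by rw [← toric_pow_mod h, pow_add])⟩
    · exact ⟨(i + j) % (n + 1), hmod _, Or.inr (by
        rw [← toric_pow_mod h, pow_add, mul_assoc])⟩
    · exact ⟨(i + j * n) % (n + 1), hmod _, Or.inr (by
        rw [← toric_pow_mod h, pow_add, mul_assoc, mul_assoc, ← rev_toric_pow h])⟩
    · refine ⟨(i + j * n) % (n + 1), hmod _, Or.inl (by
        rw [← toric_pow_mod h, pow_add]
        calc F ^ i * G * (F ^ j * G) = F ^ i * (G * F ^ j) * G := by group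
          _ = F ^ i * (F ^ (j * n) * G) * G := by rw [rev_toric_pow h]
          _ = F ^ i * F ^ (j * n) * (G * G) := by group
          _ = F ^ i * F ^ (j * n) := by rw [rev_sq, mul_one])⟩
  · rintro x - ⟨i, hi, hx | hx⟩ <;> subst hx
    · exact ⟨(i * n) % (n + 1), hmod _, Or.inl (by
        rw [← toric_pow_mod h, mul_comm i n, pow_mul, ← toric_inv h, inv_pow])⟩
    · refine ⟨(i * n * n) % (n + 1), hmod _, Or.inr (by
        rw [← toric_pow_mod h, mul_inv_rev, rev_inv]
        have h1 : (F ^ i)⁻¹ = F ^ (i * n) := by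
          rw [mul_comm i n, pow_mul, ← toric_inv h, inv_pow]
        rw [h1, rev_toric_pow h])⟩

end NormalForm
section Orbit

variable {n : ℕ}

theorem fstep' (hn : 5 ≤ n) (h : 1 ≤ n) (s : Bool) (m : ℕ) (h1 : 1 ≤ m) (hm : m ≤ n) :
    toricEquiv n h (vv n hn s m) = vv n hn s (m - 1) := by
  rw [toricEquiv_apply]; exact fstep hn s m h1 hm

theorem fwrap' (hn : 5 ≤ n) (h : 1 ≤ n) (s : Bool) :
    toricEquiv n h (vv n hn s 0) = vv n hn s n := by
  rw [toricEquiv_apply]; exact fwrap hn s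

theorem Ldown (hn : 5 ≤ n) (h : 1 ≤ n) (s : Bool) :
    ∀ j m : ℕ, j ≤ m → m ≤ n → ((toricEquiv n h) ^ j) (vv n hn s m) = vv n hn s (m - j) := by
  intro j
  induction j with
  | zero => intro m _ _; rw [pow_zero]; rfl
  | succ j ih =>
      intro m hjm hm
      rw [pow_succ, Equiv.Perm.mul_apply, fstep' hn h s m (by omega) hm,
        ih (m - 1) (by omega) (by omega), show m - 1 - j = m - (j + 1) from by omega]

theorem Lup (hn : 5 ≤ n) (h : 1 ≤ n) (s : Bool) :
    ∀ j : ℕ, j ≤ n → (((toricEquiv n h)⁻¹) ^ j) (vv n hn s 0) = vv n hn s j := by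
  intro j
  induction j with
  | zero => intro _; rw [pow_zero]; rfl
  | succ j ih =>
      intro hj
      rw [pow_succ', Equiv.Perm.mul_apply, ih (by omega)]
      have hs := fstep' hn h s (j + 1) (by omega) hj
      have : j + 1 - 1 = j := rfl
      rw [this] at hs
      rw [← hs, Equiv.Perm.inv_apply_self]

theorem Lmem (hn : 5 ≤ n) (h : 1 ≤ n) (s : Bool) :
    ∀ i m : ℕ, m ≤ n → ∃ m' ≤ n, ((toricEquiv n h) ^ i) (vv n hn s m) = vv n hn s m' := by
  intro i
  induction i with
  | zero => intro m hm; exact ⟨m, hm, rfl⟩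
  | succ i ih =>
      intro m hm
      obtain ⟨m', hm', hEq⟩ := ih m hm
      rw [pow_succ', Equiv.Perm.mul_apply, hEq]
      by_cases h0 : m' = 0
      · subst h0
        exact ⟨n, le_refl n, fwrap' hn h s⟩
      · exact ⟨m' - 1, by omega, fstep' hn h s m' (by omega) hm'⟩

theorem vv_false_ne_top (hn : 5 ≤ n) {m : ℕ} (hm : m < n) :
    vv n hn false m ≠ vv n hn false n := by
  intro hEq
  rw [vv_false_top hn] at hEq
  by_cases hA : m ≤ n - 3
  · rw [vv_false_low hn hA] at hEq
    have h0 := congrArg (fun (e : Equiv.Perm (Fin n)) => (e ⟨0, by omega⟩).val) hEq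
    simp only [blockT, Equiv.coe_fn_mk] at h0
    unfold btFun at h0
    split_ifs at h0 <;> omega
  · by_cases hB : m = n - 2
    · rw [hB, vv_false_n2 hn] at hEq
      have h0 := congrArg (fun (e : Equiv.Perm (Fin n)) => (e ⟨0, by omega⟩).val) hEq
      simp only [blockT, Equiv.coe_fn_mk] at h0
      unfold btFun at h0
      split_ifs at h0 <;> omega
    · have hC : m = n - 1 := by omega
      rw [hC, vv_false_n1 hn] at hEq
      have h0 := congrArg (fun (e : Equiv.Perm (Fin n)) => (e ⟨0, by omega⟩).val) hEq
      simp only [blockT, Equiv.coe_fn_mk] at h0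
      unfold btFun at h0
      split_ifs at h0 <;> omega

theorem vv_true_ne_top (hn : 5 ≤ n) {m : ℕ} (hm : m ≤ n) :
    vv n hn true m ≠ vv n hn false n := by
  intro hEq
  rw [vv_false_top hn] at hEq
  by_cases hA : m ≤ n - 3
  · rw [vv_true_low hn hA] at hEq
    by_cases h0 : m = 0
    · subst h0
      have h1 := congrArg (fun (e : Equiv.Perm (Fin n)) => (e ⟨1, by omega⟩).val) hEq
      simp only [blockT, Equiv.coe_fn_mk] at h1
      unfold btFun at h1
      split_ifs at h1 <;> omega
    · have h1 := congrArg (fun (e : Equiv.Perm (Fin n)) => (e ⟨0, by omega⟩).val) hEq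
      simp only [blockT, Equiv.coe_fn_mk] at h1
      unfold btFun at h1
      split_ifs at h1 <;> omega
  · by_cases hB : m = n - 2
    · rw [hB, vv_true_n2 hn] at hEq
      have h1 := congrArg (fun (e : Equiv.Perm (Fin n)) => (e ⟨0, by omega⟩).val) hEq
      simp only [blockT, Equiv.coe_fn_mk] at h1
      unfold btFun at h1
      split_ifs at h1 <;> omega
    · by_cases hC : m = n - 1
      · rw [hC, vv_true_n1 hn] at hEq
        have h1 := congrArg (fun (e : Equiv.Perm (Fin n)) => (e ⟨0, by omega⟩).val) hEq
        simp only [blockT, Equiv.coe_fn_mk] at h1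
        unfold btFun at h1
        split_ifs at h1 <;> omega
      · have hD : m = n := by omega
        rw [hD, vv_true_top hn] at hEq
        have h1 := congrArg (fun (e : Equiv.Perm (Fin n)) => (e ⟨0, by omega⟩).val) hEq
        simp only [blockT, Equiv.coe_fn_mk] at h1
        unfold btFun at h1
        split_ifs at h1 <;> omega

end Orbit
section Assemble

variable {n : ℕ}

theorem epair_eq (hn : 5 ≤ n) (m : ℕ) (hm : m ≤ n) :
    epair n hn m hm = {vv n hn false m, vv n hn true m} := by
  by_cases hA : m ≤ n - 3
  · rw [vv_false_low hn hA, vv_true_low hn hA]; unfold epair; rw [dif_pos hA]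
  · by_cases hB : m = n - 2
    · subst hB
      rw [vv_false_n2 hn, vv_true_n2 hn]; unfold epair
      rw [dif_neg hA, dif_pos rfl]
    · by_cases hC : m = n - 1
      · subst hC
        rw [vv_false_n1 hn, vv_true_n1 hn]; unfold epair
        rw [dif_neg hA, dif_neg hB, dif_pos rfl]
      · have hD : m = n := by omega
        subst hD
        rw [vv_false_top hn, vv_true_top hn]; unfold epair
        rw [dif_neg hA, dif_neg hB, dif_neg hC]

theorem mem_Vset_iff (hn : 5 ≤ n) (π : Equiv.Perm (Fin n)) :
    π ∈ Vset n hn ↔ ∃ s : Bool, ∃ m ≤ n, π = vv n hn s m := by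
  constructor
  · rintro ⟨m, hm, hπ⟩
    rw [epair_eq hn m hm] at hπ
    rcases hπ with h | h
    · exact ⟨false, m, hm, h⟩
    · exact ⟨true, m, hm, h⟩
  · rintro ⟨s, m, hm, rfl⟩
    refine ⟨m, hm, ?_⟩
    rw [epair_eq hn m hm]
    cases s
    · exact Or.inl rfl
    · exact Or.inr rfl

theorem toric_mem (h : 1 ≤ n) : toricEquiv n h ∈ toricReverseGroup n h :=
  Subgroup.subset_closure (Or.inl rfl)

theorem rev_mem (h : 1 ≤ n) : revEquiv n ∈ toricReverseGroup n h :=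
  Subgroup.subset_closure (Or.inr rfl)

theorem reach (hn : 5 ≤ n) (h : 1 ≤ n) (s : Bool) (m : ℕ) (hm : m ≤ n) :
    ∃ a ∈ toricReverseGroup n h, a (vv n hn false n) = vv n hn s m := by
  cases s
  · refine ⟨((toricEquiv n h)⁻¹) ^ m * (toricEquiv n h) ^ n,
      mul_mem (pow_mem (inv_mem (toric_mem h)) m) (pow_mem (toric_mem h) n), ?_⟩
    rw [Equiv.Perm.mul_apply, Ldown hn h false n n (le_refl n) (le_refl n),
      Nat.sub_self, Lup hn h false m hm]
  · refine ⟨((toricEquiv n h)⁻¹) ^ m * ((toricEquiv n h) ^ (n - 2) * revEquiv n),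
      mul_mem (pow_mem (inv_mem (toric_mem h)) m)
        (mul_mem (pow_mem (toric_mem h) (n - 2)) (rev_mem h)), ?_⟩
    rw [Equiv.Perm.mul_apply, Equiv.Perm.mul_apply, grev0 hn,
      Ldown hn h true (n - 2) (n - 2) (le_refl _) (by omega),
      Nat.sub_self, Lup hn h true m hm]

theorem stab_triv (hn : 5 ≤ n) (h : 1 ≤ n) {d : Equiv.Perm (Equiv.Perm (Fin n))}
    (hd : d ∈ toricReverseGroup n h)
    (hfix : d (vv n hn false n) = vv n hn false n) : d = 1 := by
  obtain ⟨i, hi, rfl | rfl⟩ := mem_D_form h hd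
  · rw [Ldown hn h false i n hi (le_refl n)] at hfix
    by_cases hi0 : i = 0
    · subst hi0; rw [pow_zero]
    · exact absurd hfix (vv_false_ne_top hn (by omega))
  · rw [Equiv.Perm.mul_apply, grev0 hn] at hfix
    obtain ⟨m', hm', hEq⟩ := Lmem hn h true i (n - 2) (by omega)
    rw [hEq] at hfix
    exact absurd hfix (vv_true_ne_top hn hm')

end Assemble

end Ported

/-- For `n ≥ 5`, the set `V` is invariant under the toric-reverse
group `D_{n+1}`, and `D_{n+1}` acts sharply transitively on `V`. -/
theorem stmt_16 (n : ℕ) (hn : 5 ≤ n) :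
    (∀ d ∈ toricReverseGroup n (by omega), ∀ v ∈ Vset n hn, d v ∈ Vset n hn) ∧
    (∀ u ∈ Vset n hn, ∀ v ∈ Vset n hn,
      ∃! d : toricReverseGroup n (by omega : 1 ≤ n),
        (d : Equiv.Perm (Equiv.Perm (Fin n))) u = v) := by
  have h1 : 1 ≤ n := by omega
  constructor
  · intro d hd v hv
    obtain ⟨i, hi, rfl | rfl⟩ := mem_D_form h1 hd
    · rw [mem_Vset_iff hn] at hv ⊢
      obtain ⟨s, m, hm, rfl⟩ := hv
      obtain ⟨m', hm', hEq⟩ := Lmem hn h1 s i m hm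
      exact ⟨s, m', hm', hEq⟩
    · rw [mem_Vset_iff hn] at hv ⊢
      obtain ⟨s, m, hm, rfl⟩ := hv
      rw [Equiv.Perm.mul_apply]
      obtain ⟨m2, hm2, hEq2⟩ := grev_mem hn s m hm
      rw [hEq2]
      obtain ⟨m', hm', hEq⟩ := Lmem hn h1 (!s) i m2 hm2
      exact ⟨!s, m', hm', hEq⟩
  · intro u hu v hv
    rw [mem_Vset_iff hn] at hu hv
    obtain ⟨s, m, hm, rfl⟩ := hu
    obtain ⟨s', m', hm', rfl⟩ := hv
    obtain ⟨a, ha, haeq⟩ := reach hn h1 s m hm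
    obtain ⟨b, hb, hbeq⟩ := reach hn h1 s' m' hm'
    refine ⟨⟨b * a⁻¹, mul_mem hb (inv_mem ha)⟩, ?_, ?_⟩
    · show (b * a⁻¹) (vv n hn s m) = vv n hn s' m'
      rw [← haeq, Equiv.Perm.mul_apply, Equiv.Perm.inv_apply_self, hbeq]
    · rintro ⟨e, he⟩ heq
      apply Subtype.ext
      show e = b * a⁻¹
      have heq' : e (vv n hn s m) = vv n hn s' m' := heq
      have hw : (b⁻¹ * e * a) ∈ toricReverseGroup n h1 :=
        mul_mem (mul_mem (inv_mem hb) he) ha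
      have hwfix : (b⁻¹ * e * a) (vv n hn false n) = vv n hn false n := by
        rw [Equiv.Perm.mul_apply, Equiv.Perm.mul_apply, haeq, heq', ← hbeq,
          Equiv.Perm.inv_apply_self]
      have h3 : b⁻¹ * e * a = 1 := stab_triv hn h1 hw hwfix
      calc e = b * (b⁻¹ * e * a) * a⁻¹ := by group
        _ = b * 1 * a⁻¹ := by rw [h3]
        _ = b * a⁻¹ := by group
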